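/- For n ≥ 4, every reset word of the automaton 𝒟'_n has length at least n² - 3n + 4; hence the reset threshold of 𝒟'_n is exactly n² - 3n + 4. -/

import Mathlib

/-- The state reached from `q` by reading the word `w`. -/
def run {Q A : Type*} (δ : Q → A → Q) (q : Q) (w : List A) : Q := w.foldl δ q

/-- The automaton `𝒟'_n` on states `0,…,n-1` (paper's `1,…,n` shifted by one):
the letter `a` (= `true`) sends `i ↦ i+1` for `i < n-2`, `n-2 ↦ 0`, `n-1 ↦ 1`;
the letter `b` (= `false`) is the cyclic shift `i ↦ i+1 (mod n)`. -/
def d1Aut (n : ℕ) (q : ZMod n) : Bool → ZMod n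
  | true => if q.val = n - 2 then 0 else if q.val = n - 1 then 1 else q + 1
  | false => q + 1

@[simp] lemma run_nil {Q A : Type*} (δ : Q → A → Q) (q : Q) : run δ q [] = q := rfl
@[simp] lemma run_cons {Q A : Type*} (δ : Q → A → Q) (q : Q) (c : A) (t : List A) :
    run δ q (c :: t) = run δ (δ q c) t := rfl
@[simp] lemma run_append {Q A : Type*} (δ : Q → A → Q) (q : Q) (u v : List A) :
    run δ q (u ++ v) = run δ (run δ q u) v := List.foldl_append ..

def Ecount (n : ℕ) : ZMod n → List Bool → ℕ
  | _, [] => 0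
  | q, c :: t =>
      (if c = true ∧ (q.val = n - 2 ∨ q.val = n - 1) then 1 else 0)
      + Ecount n (d1Aut n q c) t

section
variable {n : ℕ} (hn : 4 ≤ n)
include hn

lemma cast_val_eq (q : ZMod n) : ((q.val : ℕ) : ZMod n) = q := by
  haveI : NeZero n := ⟨by omega⟩
  exact ZMod.natCast_rightInverse q

lemma castn2 : ((n - 2 : ℕ) : ZMod n) + 2 = 0 := by
  rw [show (0 : ZMod n) = ((n : ℕ) : ZMod n) by rw [ZMod.natCast_self],
      show (n : ℕ) = (n - 2) + 2 by omega]
  push_cast; ring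

lemma castn1 : ((n - 1 : ℕ) : ZMod n) + 2 = 1 := by
  have h1 : ((n + 1 : ℕ) : ZMod n) = 1 := by push_cast [ZMod.natCast_self]; ring
  rw [← h1, show (n + 1 : ℕ) = (n - 1) + 2 by omega]; push_cast; ring

lemma step_eq (q : ZMod n) (c : Bool) :
    d1Aut n q c = q + 1 +
      (if c = true ∧ (q.val = n - 2 ∨ q.val = n - 1) then 1 else 0) := by
  cases c with
  | false => simp [d1Aut]
  | true =>
    rcases eq_or_ne q.val (n-2) with h2 | h2
    · have hq : q = ((n-2 : ℕ) : ZMod n) := by rw [← cast_val_eq hn q, h2]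
      have hL : d1Aut n q true = 0 := by simp [d1Aut, h2]
      rw [hL, if_pos ⟨rfl, Or.inl h2⟩, hq, add_assoc,
        show (1 : ZMod n) + 1 = 2 by norm_num, castn2 hn]
    · rcases eq_or_ne q.val (n-1) with h1 | h1
      · have hq : q = ((n-1 : ℕ) : ZMod n) := by rw [← cast_val_eq hn q, h1]
        have hL : d1Aut n q true = 1 := by simp [d1Aut, h1, h2, show ¬(n-1 = n-2) by omega]
        rw [hL, if_pos ⟨rfl, Or.inr h1⟩, hq, add_assoc,
          show (1 : ZMod n) + 1 = 2 by norm_num, castn1 hn]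
      · simp [d1Aut, h1, h2]

lemma step_inc (q : ZMod n) (c : Bool) (h : c = true ∧ (q.val = n - 2 ∨ q.val = n - 1)) :
    d1Aut n q c = q + 2 := by
  rw [step_eq hn q c, if_pos h]; ring

lemma step_noinc (q : ZMod n) (c : Bool) (h : ¬(c = true ∧ (q.val = n - 2 ∨ q.val = n - 1))) :
    d1Aut n q c = q + 1 := by
  rw [step_eq hn q c, if_neg h]; ring

lemma run_eq : ∀ (w : List Bool) (q : ZMod n),
    run (d1Aut n) q w = q + w.length + Ecount n q w := by
  intro w
  induction w with
  | nil => intro q; simp [Ecount]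
  | cons c t ih =>
    intro q
    by_cases h : c = true ∧ (q.val = n - 2 ∨ q.val = n - 1)
    · simp only [run_cons, Ecount, if_pos h, List.length_cons, ih]
      rw [step_inc hn q c h]; push_cast; ring
    · simp only [run_cons, Ecount, if_neg h, List.length_cons, ih]
      rw [step_noinc hn q c h]; push_cast; ring

lemma key : ∀ (w : List Bool) (q : ZMod n),
    n * Ecount n q w + (run (d1Aut n) q w).val ≤ q.val + w.length + Ecount n q w := by
  haveI : NeZero n := ⟨by omega⟩
  haveI : Fact (1 < n) := ⟨by omega⟩
  intro w
  induction w with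
  | nil => intro q; simp [Ecount]
  | cons c t ih =>
    intro q
    have ihq := ih (d1Aut n q c)
    simp only [Ecount, run_cons, List.length_cons]
    by_cases h : c = true ∧ (q.val = n - 2 ∨ q.val = n - 1)
    · have hstep : (d1Aut n q c).val + n ≤ q.val + 2 := by
        obtain ⟨hc, hv⟩ := h
        rcases hv with hv | hv
        · have : d1Aut n q c = 0 := by subst hc; simp [d1Aut, hv]
          rw [this, ZMod.val_zero]; omega
        · have : d1Aut n q c = 1 := by
            subst hc; simp [d1Aut, hv, show ¬(n-1 = n-2) by omega]
          rw [this, ZMod.val_one]; omega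
      rw [if_pos h]
      have hexp : n * (1 + Ecount n (d1Aut n q c) t)
          = n + n * Ecount n (d1Aut n q c) t := by ring
      omega
    · have hd : d1Aut n q c = q + 1 := step_noinc hn q c h
      have hstep : (d1Aut n q c).val ≤ q.val + 1 := by
        rw [hd]
        have h2 : (q + 1).val ≤ q.val + (1 : ZMod n).val := by
          rw [ZMod.val_add]; exact Nat.mod_le _ _
        rw [ZMod.val_one] at h2; exact h2
      rw [if_neg h]
      have hexp : n * (0 + Ecount n (d1Aut n q c) t) = n * Ecount n (d1Aut n q c) t := by ring
      omega

end
lemma lowerMain {n : ℕ} (hn : 4 ≤ n) (w : List Bool)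
    (hw : ∀ q, run (d1Aut n) q w = 1) : n ^ 2 - 3 * n + 4 ≤ w.length := by
  obtain ⟨m, rfl⟩ : ∃ m, n = m + 4 := ⟨n - 4, by omega⟩
  haveI : NeZero (m + 4) := ⟨by omega⟩
  haveI : Fact (1 < m + 4) := ⟨by omega⟩
  have hgoal : (m + 4) ^ 2 - 3 * (m + 4) + 4 = m * m + 5 * m + 8 := by
    have h : (m + 4) ^ 2 = m * m + 8 * m + 16 := by ring
    omega
  rw [hgoal]
  by_contra hcon
  push_neg at hcon
  set L := w.length with hLdef
  -- residues
  have resid : ∀ q : ZMod (m + 4),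
      ((Ecount (m + 4) q w : ℕ) : ZMod (m + 4)) = 1 - q - (L : ℕ) := by
    intro q
    have h := run_eq hn w q
    rw [hw q] at h
    linear_combination -h
  -- the special starting state q0
  set q0 : ZMod (m + 4) := 2 - ((L : ℕ) : ZMod (m + 4)) with hq0def
  set E0 := Ecount (m + 4) q0 w with hE0def
  have hneg : ((m + 3 : ℕ) : ZMod (m + 4)) = -1 := by
    have h := castn1 hn
    rw [show m + 4 - 1 = m + 3 by omega] at h
    linear_combination h
  have hres0 : ((E0 : ℕ) : ZMod (m + 4)) = ((m + 3 : ℕ) : ZMod (m + 4)) := by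
    rw [resid q0, hneg, hq0def]; ring
  have hmod0 : E0 % (m + 4) = m + 3 := by
    have h := (ZMod.natCast_eq_natCast_iff _ _ _).mp hres0
    unfold Nat.ModEq at h
    have h2 : (m + 3) % (m + 4) = m + 3 := Nat.mod_eq_of_lt (by omega)
    omega
  have hkey0 := key hn w q0
  rw [hw q0, ZMod.val_one, ← hE0def] at hkey0
  have hq0lt : q0.val < m + 4 := ZMod.val_lt q0
  -- split the product
  have hsplit0 : (m + 4) * E0 = (m + 3) * E0 + E0 := by ring
  -- E0 = m + 3
  have hE0 : E0 = m + 3 := by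
    have hdm := Nat.div_add_mod E0 (m + 4)
    rw [hmod0] at hdm
    by_contra hE0ne
    have hk1 : 1 ≤ E0 / (m + 4) := by
      rcases Nat.eq_zero_or_pos (E0 / (m + 4)) with h0 | h0
      · rw [h0] at hdm; simp at hdm; omega
      · exact h0
    have hmul1 : (m + 4) * 1 ≤ (m + 4) * (E0 / (m + 4)) := Nat.mul_le_mul_left _ hk1
    have hge : 2 * m + 7 ≤ E0 := by omega
    have hmul : (m + 3) * (2 * m + 7) ≤ (m + 3) * E0 := Nat.mul_le_mul_left _ hge
    have hexp : (m + 3) * (2 * m + 7) = 2 * (m * m) + 13 * m + 21 := by ring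
    omega
  rw [hE0] at hkey0
  have hexp0 : (m + 4) * (m + 3) = m * m + 7 * m + 12 := by ring
  -- forces q0.val = m+3 and L = m*m+5m+7
  have hq0val : q0.val = m + 3 := by omega
  have hLval : L = m * m + 5 * m + 7 := by omega
  have hq0 : q0 = ((m + 3 : ℕ) : ZMod (m + 4)) := by rw [← cast_val_eq hn q0, hq0val]
  -- second state q1 with zero increments
  set q1 : ZMod (m + 4) := ((m + 2 : ℕ) : ZMod (m + 4)) with hq1def
  have hq1val : q1.val = m + 2 := ZMod.val_cast_of_lt (by omega)
  set E1 := Ecount (m + 4) q1 w with hE1def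
  have hres1 : ((E1 : ℕ) : ZMod (m + 4)) = 0 := by
    rw [resid q1]
    have hq0eq : 2 - ((L : ℕ) : ZMod (m + 4)) = ((m + 3 : ℕ) : ZMod (m + 4)) := by
      rw [← hq0def, hq0]
    have hcast : ((m + 3 : ℕ) : ZMod (m + 4)) = ((m + 2 : ℕ) : ZMod (m + 4)) + 1 := by
      push_cast; ring
    rw [hq1def]
    linear_combination hq0eq + hcast
  have hdvd : (m + 4) ∣ E1 := (ZMod.natCast_eq_zero_iff E1 (m + 4)).mp hres1
  have hkey1 := key hn w q1
  rw [hw q1, ZMod.val_one, hq1val, ← hE1def] at hkey1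
  have hsplit1 : (m + 4) * E1 = (m + 3) * E1 + E1 := by ring
  have hE1 : E1 = 0 := by
    obtain ⟨j, hj⟩ := hdvd
    rcases Nat.eq_zero_or_pos j with hj0 | hj0
    · rw [hj0, Nat.mul_zero] at hj; exact hj
    · exfalso
      have : (m + 4) * 1 ≤ (m + 4) * j := Nat.mul_le_mul_left _ hj0
      have hge : m + 4 ≤ E1 := by omega
      have hmul : (m + 3) * (m + 4) ≤ (m + 3) * E1 := Nat.mul_le_mul_left _ hge
      have hexp : (m + 3) * (m + 4) = m * m + 7 * m + 12 := by ring
      omega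
  -- w is nonempty and must start with b
  cases w with
  | nil =>
    have h0 : (0 : ZMod (m + 4)) = 1 := hw 0
    have h1 : ((0 : ZMod (m + 4))).val = (1 : ZMod (m + 4)).val := by rw [h0]
    rw [ZMod.val_zero, ZMod.val_one] at h1
    omega
  | cons c t =>
    cases c with
    | true =>
      have h1 : 1 ≤ E1 := by
        rw [hE1def]
        have huf : Ecount (m + 4) q1 (true :: t)
            = (if true = true ∧ (q1.val = m + 4 - 2 ∨ q1.val = m + 4 - 1) then 1 else 0)
              + Ecount (m + 4) (d1Aut (m + 4) q1 true) t := rfl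
        rw [huf, if_pos ⟨rfl, Or.inl (by rw [hq1val]; omega)⟩]
        omega
      omega
    | false =>
      -- trajectory from q0 : first step goes to 0, keeping all m+3 increments
      have hstep : d1Aut (m + 4) q0 false = 0 := by
        show q0 + 1 = 0
        rw [hq0]
        have : ((m + 3 : ℕ) : ZMod (m + 4)) + 1 = ((m + 4 : ℕ) : ZMod (m + 4)) := by
          push_cast; ring
        rw [this, ZMod.natCast_self]
      have hE0t : Ecount (m + 4) (0 : ZMod (m + 4)) t = m + 3 := by
        have : E0 = Ecount (m + 4) (d1Aut (m + 4) q0 false) t := by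
          rw [hE0def]
          simp only [Ecount]
          rw [if_neg (by simp)]
          omega
        rw [← hstep, ← this, hE0]
      have hrunt : run (d1Aut (m + 4)) (0 : ZMod (m + 4)) t = 1 := by
        have := hw q0
        rw [run_cons, hstep] at this
        exact this
      have hkeyt := key hn t 0
      rw [hrunt, ZMod.val_one, ZMod.val_zero, hE0t] at hkeyt
      have hlen : t.length + 1 = L := by rw [hLdef]; simp
      have hexp : (m + 4) * (m + 3) = m * m + 7 * m + 12 := by ring
      omega
section
variable {n : ℕ} (hn : 4 ≤ n)
include hn

lemma neg_one_cast : ((n - 1 : ℕ) : ZMod n) = -1 := by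
  have h := castn1 hn
  linear_combination h

lemma merge_to_one {x y : ZMod n} (hxy : x ≠ y)
    (h : d1Aut n x true = d1Aut n y true) : d1Aut n x true = 1 := by
  haveI : NeZero n := ⟨by omega⟩
  haveI : Fact (1 < n) := ⟨by omega⟩
  have hvalneg : ((-1 : ZMod n)).val = n - 1 := by
    rw [← neg_one_cast hn]; exact ZMod.val_cast_of_lt (by omega)
  rcases eq_or_ne x.val (n-2) with hx2 | hx2
  · exfalso
    have hax : d1Aut n x true = 0 := by
      show (if x.val = n-2 then 0 else if x.val = n-1 then 1 else x + 1) = 0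
      rw [if_pos hx2]
    rcases eq_or_ne y.val (n-2) with hy2 | hy2
    · exact hxy (by rw [← cast_val_eq hn x, ← cast_val_eq hn y, hx2, hy2])
    · rcases eq_or_ne y.val (n-1) with hy1 | hy1
      · have hay : d1Aut n y true = 1 := by
          show (if y.val = n-2 then 0 else if y.val = n-1 then 1 else y + 1) = 1
          rw [if_neg hy2, if_pos hy1]
        rw [hax, hay] at h
        have := congrArg ZMod.val h
        rw [ZMod.val_zero, ZMod.val_one] at this
        omega
      · have hay : d1Aut n y true = y + 1 := by
          show (if y.val = n-2 then 0 else if y.val = n-1 then 1 else y + 1) = y + 1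
          rw [if_neg hy2, if_neg hy1]
        rw [hax, hay] at h
        have hy : y = -1 := by linear_combination -h
        rw [hy, hvalneg] at hy1
        exact hy1 rfl
  · rcases eq_or_ne x.val (n-1) with hx1 | hx1
    · show (if x.val = n-2 then 0 else if x.val = n-1 then 1 else x + 1) = 1
      rw [if_neg hx2, if_pos hx1]
    · have hax : d1Aut n x true = x + 1 := by
        show (if x.val = n-2 then 0 else if x.val = n-1 then 1 else x + 1) = x + 1
        rw [if_neg hx2, if_neg hx1]
      rcases eq_or_ne y.val (n-2) with hy2 | hy2
      · exfalso
        have hay : d1Aut n y true = 0 := by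
          show (if y.val = n-2 then 0 else if y.val = n-1 then 1 else y + 1) = 0
          rw [if_pos hy2]
        rw [hax, hay] at h
        have hx : x = -1 := by linear_combination h
        rw [hx, hvalneg] at hx1
        exact hx1 rfl
      · rcases eq_or_ne y.val (n-1) with hy1 | hy1
        · have hay : d1Aut n y true = 1 := by
            show (if y.val = n-2 then 0 else if y.val = n-1 then 1 else y + 1) = 1
            rw [if_neg hy2, if_pos hy1]
          rw [hax] at h ⊢; rw [hay] at h; exact h
        · exfalso
          have hay : d1Aut n y true = y + 1 := by
            show (if y.val = n-2 then 0 else if y.val = n-1 then 1 else y + 1) = y + 1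
            rw [if_neg hy2, if_neg hy1]
          rw [hax, hay] at h
          exact hxy (by linear_combination h)

lemma lowerBound : ∀ (w : List Bool), (∃ p, ∀ q, run (d1Aut n) q w = p) →
    n ^ 2 - 3 * n + 4 ≤ w.length := by
  haveI : NeZero n := ⟨by omega⟩
  haveI : Fact (1 < n) := ⟨by omega⟩
  intro w
  induction w using List.reverseRecOn with
  | nil =>
    rintro ⟨p, hp⟩
    exfalso
    have h01 : (0 : ZMod n) = (1 : ZMod n) := (hp 0).trans (hp 1).symm
    have := congrArg ZMod.val h01
    rw [ZMod.val_zero, ZMod.val_one] at this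
    omega
  | append_singleton u c ih =>
    rintro ⟨p, hp⟩
    have hp' : ∀ q, d1Aut n (run (d1Aut n) q u) c = p := by
      intro q
      have h := hp q
      rwa [run_append, run_cons, run_nil] at h
    have hlen : (u ++ [c]).length = u.length + 1 := by simp
    cases c with
    | false =>
      have hre : ∀ q, run (d1Aut n) q u = p - 1 := by
        intro q
        have h : run (d1Aut n) q u + 1 = p := hp' q
        linear_combination h
      have := ih ⟨p - 1, hre⟩
      omega
    | true =>
      by_cases hconst : ∀ q, run (d1Aut n) q u = run (d1Aut n) 0 u
      · have := ih ⟨run (d1Aut n) 0 u, hconst⟩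
        omega
      · push_neg at hconst
        obtain ⟨q2, hq2⟩ := hconst
        have hmerge : d1Aut n (run (d1Aut n) q2 u) true = 1 :=
          merge_to_one hn hq2 ((hp' q2).trans (hp' 0).symm)
        have hp1 : p = 1 := by rw [← hp' q2, hmerge]
        have hw1 : ∀ q, run (d1Aut n) q (u ++ [true]) = 1 := by
          intro q; rw [hp q, hp1]
        exact lowerMain hn (u ++ [true]) hw1

end
def block (n : ℕ) : List Bool := false :: false :: List.replicate (n - 2) true

def resetWord (n : ℕ) : List Bool :=
  true :: ((List.replicate (n - 3) (block n)).flatten ++ [false, false, true])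

lemma flatten_rep_len {α : Type*} (k : ℕ) (l : List α) :
    (List.replicate k l).flatten.length = k * l.length := by
  induction k with
  | zero => simp
  | succ k ih => rw [List.replicate_succ, List.flatten_cons, List.length_append, ih]; ring

section
variable {n : ℕ} (hn : 4 ≤ n)
include hn

lemma resetWord_length : (resetWord n).length = n ^ 2 - 3 * n + 4 := by
  have hb : (block n).length = n := by simp [block]; omega
  have h1 : (n - 3) * n = n * n - 3 * n := Nat.sub_mul _ _ _
  have h2 : n ^ 2 = n * n := sq n
  have h3 : 3 * n + 4 ≤ n * n := by nlinarith
  simp [resetWord, flatten_rep_len, hb]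
  omega

lemma runRep : ∀ (k v : ℕ), v + k ≤ n - 2 →
    run (d1Aut n) ((v : ℕ) : ZMod n) (List.replicate k true) = ((v + k : ℕ) : ZMod n) := by
  haveI : NeZero n := ⟨by omega⟩
  intro k
  induction k with
  | zero => intro v h; simp
  | succ k ih =>
    intro v h
    rw [List.replicate_succ, run_cons]
    have hval : ((v : ℕ) : ZMod n).val = v := ZMod.val_cast_of_lt (by omega)
    have hst : d1Aut n ((v : ℕ) : ZMod n) true = ((v + 1 : ℕ) : ZMod n) := by
      show (if ((v : ℕ) : ZMod n).val = n-2 then 0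
            else if ((v : ℕ) : ZMod n).val = n-1 then 1 else ((v : ℕ) : ZMod n) + 1) = _
      rw [hval, if_neg (by omega), if_neg (by omega)]
      push_cast; ring
    rw [hst, ih (v+1) (by omega)]
    congr 1
    omega

lemma runA_n2 : d1Aut n (((n - 2 : ℕ) : ZMod n)) true = 0 := by
  haveI : NeZero n := ⟨by omega⟩
  have hval : (((n - 2 : ℕ)) : ZMod n).val = n - 2 := ZMod.val_cast_of_lt (by omega)
  show (if _ = n-2 then 0 else if _ = n-1 then 1 else _ + 1) = 0
  rw [hval, if_pos rfl]

lemma runA_n1 : d1Aut n (((n - 1 : ℕ) : ZMod n)) true = 1 := by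
  haveI : NeZero n := ⟨by omega⟩
  have hval : (((n - 1 : ℕ)) : ZMod n).val = n - 1 := ZMod.val_cast_of_lt (by omega)
  show (if _ = n-2 then 0 else if _ = n-1 then 1 else _ + 1) = 1
  rw [hval, if_neg (by omega), if_pos rfl]

lemma runA_zero : d1Aut n (0 : ZMod n) true = 1 := by
  haveI : NeZero n := ⟨by omega⟩
  have hval : (0 : ZMod n).val = 0 := ZMod.val_zero
  show (if _ = n-2 then 0 else if _ = n-1 then 1 else _ + 1) = 1
  rw [hval, if_neg (by omega), if_neg (by omega), zero_add]

lemma runBlock (v : ℕ) (hv : v ≤ n - 2) :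
    run (d1Aut n) ((v : ℕ) : ZMod n) (block n) = ((min (v + 1) (n - 2) : ℕ) : ZMod n) := by
  haveI : NeZero n := ⟨by omega⟩
  have hbb : run (d1Aut n) ((v : ℕ) : ZMod n) (block n)
      = run (d1Aut n) (((v : ℕ) : ZMod n) + 1 + 1) (List.replicate (n-2) true) := rfl
  rw [hbb]
  rcases le_or_gt v (n - 4) with h4 | h4
  · -- generic case: v + 2 ≤ n - 2
    have hc : ((v : ℕ) : ZMod n) + 1 + 1 = ((v + 2 : ℕ) : ZMod n) := by push_cast; ring
    have hdec : List.replicate (n-2) (true : Bool)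
        = List.replicate (n-4-v) true ++ (true :: List.replicate (v+1) true) := by
      rw [show (true : Bool) :: List.replicate (v+1) true = List.replicate (v+2) true from
          (List.replicate_succ (a := true) (n := v+1)).symm, ← List.replicate_add]
      congr 1
      omega
    rw [hc, hdec, run_append, runRep hn (n-4-v) (v+2) (by omega)]
    rw [show v + 2 + (n-4-v) = n - 2 by omega, run_cons, runA_n2 hn]
    rw [show (0 : ZMod n) = ((0 : ℕ) : ZMod n) by simp]
    rw [runRep hn (v+1) 0 (by omega)]
    congr 1
    omega
  · rcases eq_or_ne v (n - 3) with h3 | h3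
    · -- v = n - 3 : lands on n-1, jumps to 1, then climbs to n-2
      have hc : ((v : ℕ) : ZMod n) + 1 + 1 = ((n - 1 : ℕ) : ZMod n) := by
        rw [show (n - 1 : ℕ) = v + 2 by omega]; push_cast; ring
      have hdec : List.replicate (n-2) (true : Bool)
          = true :: List.replicate (n-3) true := by
        rw [show n - 2 = (n - 3) + 1 by omega, List.replicate_succ]
      rw [hc, hdec, run_cons, runA_n1 hn]
      rw [show (1 : ZMod n) = ((1 : ℕ) : ZMod n) by simp]
      rw [runRep hn (n-3) 1 (by omega)]
      congr 1
      omega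
    · -- v = n - 2 : lands on 0, climbs to n-2
      have hv2 : v = n - 2 := by omega
      have hc : ((v : ℕ) : ZMod n) + 1 + 1 = ((0 : ℕ) : ZMod n) := by
        rw [hv2, show ((0:ℕ) : ZMod n) = ((n : ℕ) : ZMod n) by rw [ZMod.natCast_self]; simp,
           show (n : ℕ) = (n - 2) + 2 by omega]
        push_cast; ring
      rw [hc, runRep hn (n-2) 0 (by omega)]
      congr 1
      omega

lemma runBlocks : ∀ (k v : ℕ), v ≤ n - 2 →
    run (d1Aut n) ((v : ℕ) : ZMod n) ((List.replicate k (block n)).flatten)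
      = ((min (v + k) (n - 2) : ℕ) : ZMod n) := by
  intro k
  induction k with
  | zero =>
    intro v hv
    rw [List.replicate_zero, List.flatten_nil, run_nil]
    congr 1
    omega
  | succ k ih =>
    intro v hv
    rw [List.replicate_succ, List.flatten_cons, run_append, runBlock hn v hv,
        ih (min (v+1) (n-2)) (by omega)]
    congr 1
    omega

lemma resets (q : ZMod n) : run (d1Aut n) q (resetWord n) = 1 := by
  haveI : NeZero n := ⟨by omega⟩
  rw [resetWord, run_cons]
  obtain ⟨v, hv, hcast⟩ : ∃ v, v ≤ n - 2 ∧ d1Aut n q true = ((v : ℕ) : ZMod n) := by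
    rcases eq_or_ne q.val (n-2) with h2 | h2
    · refine ⟨0, by omega, ?_⟩
      have : q = ((n - 2 : ℕ) : ZMod n) := by rw [← cast_val_eq hn q, h2]
      rw [this, runA_n2 hn]; simp
    · rcases eq_or_ne q.val (n-1) with h1 | h1
      · refine ⟨1, by omega, ?_⟩
        have : q = ((n - 1 : ℕ) : ZMod n) := by rw [← cast_val_eq hn q, h1]
        rw [this, runA_n1 hn]; simp
      · refine ⟨q.val + 1, by have := ZMod.val_lt q; omega, ?_⟩
        have hd : d1Aut n q true = q + 1 := by
          show (if q.val = n-2 then 0 else if q.val = n-1 then 1 else q + 1) = q + 1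
          rw [if_neg h2, if_neg h1]
        rw [hd]; push_cast; linear_combination -cast_val_eq hn q
  rw [hcast, run_append, runBlocks hn (n-3) v hv]
  set msv := min (v + (n - 3)) (n - 2) with hmsv
  have hrange : msv = n - 3 ∨ msv = n - 2 := by omega
  have hfin : run (d1Aut n) ((msv : ℕ) : ZMod n) [false, false, true]
      = d1Aut n (((msv : ℕ) : ZMod n) + 1 + 1) true := rfl
  rw [hfin]
  rcases hrange with h | h
  · have hc : ((msv : ℕ) : ZMod n) + 1 + 1 = ((n - 1 : ℕ) : ZMod n) := by
      rw [h, show (n - 1 : ℕ) = (n - 3) + 2 by omega]; push_cast; ring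
    rw [hc, runA_n1 hn]
  · have hc : ((msv : ℕ) : ZMod n) + 1 + 1 = (0 : ZMod n) := by
      rw [h]
      have := castn2 hn
      linear_combination this
    rw [hc, runA_zero hn]

end


/-- For `n ≥ 4`, every reset word of `𝒟'_n` has length at least `n² - 3n + 4`;
hence the reset threshold of `𝒟'_n` is exactly `n² - 3n + 4`. -/
theorem stmt_13 (n : ℕ) (hn : 4 ≤ n) :
    (∀ w : List Bool, (∃ p : ZMod n, ∀ q, run (d1Aut n) q w = p) →
      n ^ 2 - 3 * n + 4 ≤ w.length) ∧
    IsLeast {m : ℕ | ∃ w : List Bool,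
      (∃ p : ZMod n, ∀ q, run (d1Aut n) q w = p) ∧ w.length = m} (n ^ 2 - 3 * n + 4) := by
  refine ⟨fun w hw => lowerBound hn w hw, ⟨?_, ?_⟩⟩
  · exact ⟨resetWord n, ⟨1, fun q => resets hn q⟩, resetWord_length hn⟩
  · rintro m ⟨w, hw, rfl⟩
    exact lowerBound hn w hw
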